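/- Let k, ℓ, b, n₁, n₂ be positive integers with k, ℓ ≤ b, 2(k+b) < n₁, 2(ℓ+b) < n₂. Let R be a proj-intersecting family of k×ℓ rectangles in Z_{n₁} × Z_{n₂}. If the number of distinct bases J₀ ⊆ Z_{n₂} of b-blocking pairs in R is at least 1 and at most ℓ−1, then |R| ≤ 4b² + (ℓ−1)n₁. -/

import Mathlib

/-- Cyclic distance in `ZMod n`: the smaller of the two distances along the cycle. -/
def cdist {n : ℕ} (u v : ZMod n) : ℕ := min (u - v).val (v - u).val

/-- The cyclic interval of length `k` with left end `i` in `ZMod n`. -/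
def cInt {n : ℕ} (i : ZMod n) (k : ℕ) : Finset (ZMod n) :=
  (Finset.range k).image (fun j : ℕ => (i + (j : ZMod n) : ZMod n))

/-- Distance between two cyclic intervals: minimum cyclic distance between elements. -/
noncomputable def iDist {n : ℕ} (I J : Finset (ZMod n)) : ℕ :=
  sInf {d | ∃ u ∈ I, ∃ v ∈ J, d = cdist u v}

/-- `P` is a `k × ℓ` rectangle in `ZMod n₁ × ZMod n₂`. -/
def IsRect {n₁ n₂ : ℕ} (k ℓ : ℕ) (P : Finset (ZMod n₁) × Finset (ZMod n₂)) : Prop :=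
  (∃ i, P.1 = cInt i k) ∧ (∃ j, P.2 = cInt j ℓ)

/-- A family of rectangles is proj-intersecting if any two members have intersecting
projections in at least one coordinate. -/
def ProjIntersecting {n₁ n₂ : ℕ} (R : Finset (Finset (ZMod n₁) × Finset (ZMod n₂))) : Prop :=
  ∀ P ∈ R, ∀ Q ∈ R, (P.1 ∩ Q.1).Nonempty ∨ (P.2 ∩ Q.2).Nonempty

section helpers
variable {n : ℕ}

lemma mem_cInt {i x : ZMod n} {k : ℕ} : x ∈ cInt i k ↔ ∃ a < k, x = i + (a : ZMod n) := by
  simp [cInt, eq_comm]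

lemma cInt_nonempty {i : ZMod n} {k : ℕ} (hk : 0 < k) : (cInt i k).Nonempty :=
  ⟨i, mem_cInt.2 ⟨0, hk, by simp⟩⟩

lemma iDist_le {I J : Finset (ZMod n)} {u v : ZMod n} (hu : u ∈ I) (hv : v ∈ J) :
    iDist I J ≤ cdist u v :=
  Nat.sInf_le ⟨u, hu, v, hv, rfl⟩

lemma exists_iDist {I J : Finset (ZMod n)} (hI : I.Nonempty) (hJ : J.Nonempty) :
    ∃ u ∈ I, ∃ v ∈ J, iDist I J = cdist u v := by
  have h : {d | ∃ u ∈ I, ∃ v ∈ J, d = cdist u v}.Nonempty :=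
    ⟨cdist hI.choose hJ.choose, hI.choose, hI.choose_spec, hJ.choose, hJ.choose_spec, rfl⟩
  exact Nat.sInf_mem h

lemma cdist_add_le {x : ZMod n} {a a' m : ℕ} (ha : a ≤ m) (ha' : a' ≤ m) :
    cdist (x + (a : ZMod n)) (x + (a' : ZMod n)) ≤ m := by
  rcases le_total a a' with h | h
  · have he : (x + (a' : ZMod n)) - (x + (a : ZMod n)) = ((a' - a : ℕ) : ZMod n) := by
      push_cast [h]; ring
    calc cdist _ _ ≤ ((x + (a' : ZMod n)) - (x + (a : ZMod n))).val := min_le_right _ _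
    _ = ((a' - a : ℕ) : ZMod n).val := by rw [he]
    _ ≤ a' - a := by rw [ZMod.val_natCast]; exact Nat.mod_le _ _
    _ ≤ m := by omega
  · have he : (x + (a : ZMod n)) - (x + (a' : ZMod n)) = ((a - a' : ℕ) : ZMod n) := by
      push_cast [h]; ring
    calc cdist _ _ ≤ ((x + (a : ZMod n)) - (x + (a' : ZMod n))).val := min_le_left _ _
    _ = ((a - a' : ℕ) : ZMod n).val := by rw [he]
    _ ≤ a - a' := by rw [ZMod.val_natCast]; exact Nat.mod_le _ _
    _ ≤ m := by omega

lemma key_val {k b : ℕ} (hk : 0 < k) (hn : 2 * (k + b) < n) {i i' : ZMod n}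
    (h : iDist (cInt i k) (cInt i' k) ≤ b) :
    (i - i' + ((k + b - 1 : ℕ) : ZMod n)).val ≤ 2 * (k + b - 1) := by
  haveI : NeZero n := ⟨by omega⟩
  set D := k + b - 1 with hD
  obtain ⟨u, hu, v, hv, heq⟩ := exists_iDist (cInt_nonempty hk) (cInt_nonempty hk)
  obtain ⟨a, ha, hua⟩ := mem_cInt.1 hu
  obtain ⟨a', ha', hva⟩ := mem_cInt.1 hv
  have hcd : cdist u v ≤ b := heq ▸ h
  rw [cdist] at hcd
  rcases min_le_iff.mp hcd with he | he
  · -- (u - v).val ≤ b : u = v + e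
    set e := (u - v).val with hedef
    have hue : u = v + (e : ZMod n) := by
      rw [hedef, ZMod.natCast_rightInverse (u - v)]; ring
    -- i + a = i' + a' + e
    have hrel : i + (a : ZMod n) = i' + (a' : ZMod n) + (e : ZMod n) := by
      rw [← hua, ← hva] at *; rw [hue]
    set w := D + a' + e - a with hw
    have hwle : w ≤ 2 * D := by omega
    have hnat : w + a = D + a' + e := by omega
    have hcast : (w : ZMod n) + (a : ZMod n) = (D : ZMod n) + (a' : ZMod n) + (e : ZMod n) := by
      exact_mod_cast congrArg (Nat.cast : ℕ → ZMod n) hnat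
    have hfinal : i - i' + ((D : ℕ) : ZMod n) = ((w : ℕ) : ZMod n) := by
      linear_combination hrel - hcast
    rw [hfinal, ZMod.val_natCast_of_lt (by omega : w < n)]
    exact hwle
  · -- (v - u).val ≤ b : v = u + e
    set e := (v - u).val with hedef
    have hue : v = u + (e : ZMod n) := by
      rw [hedef, ZMod.natCast_rightInverse (v - u)]; ring
    have hrel : i' + (a' : ZMod n) = i + (a : ZMod n) + (e : ZMod n) := by
      rw [← hua, ← hva] at *; rw [hue]
    set w := D + a' - (a + e) with hw
    have hwle : w ≤ 2 * D := by omega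
    have hnat : w + a + e = D + a' := by omega
    have hcast : (w : ZMod n) + (a : ZMod n) + (e : ZMod n) = (D : ZMod n) + (a' : ZMod n) := by
      exact_mod_cast congrArg (Nat.cast : ℕ → ZMod n) hnat
    have hfinal : i - i' + ((D : ℕ) : ZMod n) = ((w : ℕ) : ZMod n) := by
      linear_combination -hrel - hcast
    rw [hfinal, ZMod.val_natCast_of_lt (by omega : w < n)]
    exact hwle
end helpers


open Classical in
theorem stmt7 (k ℓ b n₁ n₂ : ℕ) (hk : 0 < k) (hl : 0 < ℓ) (hkb : k ≤ b) (hlb : ℓ ≤ b)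
    (h1 : 2 * (k + b) < n₁) (h2 : 2 * (ℓ + b) < n₂)
    (R : Finset (Finset (ZMod n₁) × Finset (ZMod n₂)))
    (hrect : ∀ P ∈ R, IsRect k ℓ P) (hproj : ProjIntersecting R)
    (hlow : 1 ≤ ((R.image Prod.snd).filter
      (fun J => ∃ P ∈ R, ∃ Q ∈ R, P.2 = J ∧ Q.2 = J ∧ b + 1 ≤ iDist P.1 Q.1)).card)
    (hhigh : ((R.image Prod.snd).filter
      (fun J => ∃ P ∈ R, ∃ Q ∈ R, P.2 = J ∧ Q.2 = J ∧ b + 1 ≤ iDist P.1 Q.1)).card ≤ ℓ - 1) :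
    R.card ≤ 4 * b ^ 2 + (ℓ - 1) * n₁ := by
  classical
  haveI : NeZero n₁ := ⟨by omega⟩
  set Bl := (R.image Prod.snd).filter
      (fun J => ∃ P ∈ R, ∃ Q ∈ R, P.2 = J ∧ Q.2 = J ∧ b + 1 ≤ iDist P.1 Q.1) with hBldef
  have hl2 : 2 ≤ ℓ := by omega
  obtain ⟨J₀, hJ₀mem⟩ := Finset.card_pos.mp hlow
  obtain ⟨hJ₀im, Pb, hPbR, Qb, hQbR, hPb2, hQb2, hdistb⟩ := Finset.mem_filter.mp hJ₀mem
  -- every member's base intersects J₀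
  have hbase : ∀ P ∈ R, (P.2 ∩ J₀).Nonempty := by
    intro P hP
    by_contra hcon
    have h₁ : (P.1 ∩ Pb.1).Nonempty := by
      rcases hproj P hP Pb hPbR with h | h
      · exact h
      · rw [hPb2] at h; exact absurd h hcon
    have h₂ : (P.1 ∩ Qb.1).Nonempty := by
      rcases hproj P hP Qb hQbR with h | h
      · exact h
      · rw [hQb2] at h; exact absurd h hcon
    obtain ⟨u, hu⟩ := h₁
    obtain ⟨v, hv⟩ := h₂
    rw [Finset.mem_inter] at hu hv
    obtain ⟨x, hx⟩ := (hrect P hP).1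
    obtain ⟨a, ha, hua⟩ := mem_cInt.1 (hx ▸ hu.1)
    obtain ⟨a', ha', hva⟩ := mem_cInt.1 (hx ▸ hv.1)
    have hsmall : cdist u v ≤ k - 1 := by
      rw [hua, hva]
      exact cdist_add_le (by omega) (by omega)
    have hbig : b + 1 ≤ cdist u v := hdistb.trans (iDist_le hu.2 hv.2)
    omega
  -- J₀ is a cyclic interval
  obtain ⟨j₀, hj₀⟩ := (hrect Pb hPbR).2
  have hJ0eq : J₀ = cInt j₀ ℓ := by rw [← hPb2, hj₀]
  -- the bases
  set bases := R.image Prod.snd with hbasesdef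
  have hsub : bases ⊆ (Finset.range (2 * ℓ - 1)).image
      (fun t : ℕ => cInt (j₀ + (t : ZMod n₂) - ((ℓ - 1 : ℕ) : ZMod n₂)) ℓ) := by
    intro Y hY
    obtain ⟨P, hPR, hPY⟩ := Finset.mem_image.mp hY
    obtain ⟨j, hj⟩ := (hrect P hPR).2
    obtain ⟨y, hy⟩ := hbase P hPR
    rw [Finset.mem_inter] at hy
    obtain ⟨a, ha, hya⟩ := mem_cInt.1 (hj ▸ hy.1)
    obtain ⟨a', ha', hya'⟩ := mem_cInt.1 (hJ0eq ▸ hy.2)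
    set t := ℓ - 1 - a + a' with ht
    have htlt : t < 2 * ℓ - 1 := by omega
    have hnat : t + a = (ℓ - 1) + a' := by omega
    have hcast : (t : ZMod n₂) + (a : ZMod n₂) = ((ℓ - 1 : ℕ) : ZMod n₂) + (a' : ZMod n₂) := by
      exact_mod_cast congrArg (Nat.cast : ℕ → ZMod n₂) hnat
    have hrel : j + (a : ZMod n₂) = j₀ + (a' : ZMod n₂) := by rw [← hya, ← hya']
    have hends : j = j₀ + (t : ZMod n₂) - ((ℓ - 1 : ℕ) : ZMod n₂) := by
      linear_combination hrel - hcast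
    refine Finset.mem_image.mpr ⟨t, Finset.mem_range.mpr htlt, ?_⟩
    rw [← hends, ← hj, hPY]
  have hbasescard : bases.card ≤ 2 * ℓ - 1 :=
    (Finset.card_le_card hsub).trans (Finset.card_image_le.trans (by rw [Finset.card_range]))
  have hBlsub : Bl ⊆ bases := Finset.filter_subset _ _
  -- fiber decomposition
  have hsum : R.card = ∑ Y ∈ bases, (R.filter (fun P => P.2 = Y)).card :=
    Finset.card_eq_sum_card_fiberwise (fun x hx => Finset.mem_image_of_mem _ hx)
  -- general fiber bound
  have hfib_n1 : ∀ Y, (R.filter (fun P => P.2 = Y)).card ≤ n₁ := by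
    intro Y
    have hle : (R.filter (fun P => P.2 = Y)).card ≤
        ((Finset.univ : Finset (ZMod n₁)).image (fun i => cInt i k)).card := by
      apply Finset.card_le_card_of_injOn (fun P => P.1)
      · intro P hP
        obtain ⟨hPR, _⟩ := Finset.mem_filter.mp hP
        obtain ⟨i, hi⟩ := (hrect P hPR).1
        exact Finset.mem_image.mpr ⟨i, Finset.mem_univ i, hi.symm⟩
      · intro P hP Q hQ hPQ
        have h1' := (Finset.mem_filter.mp hP).2
        have h2' := (Finset.mem_filter.mp hQ).2
        exact Prod.ext hPQ (by rw [h1', h2'])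
    calc (R.filter (fun P => P.2 = Y)).card
        ≤ _ := hle
      _ ≤ (Finset.univ : Finset (ZMod n₁)).card := Finset.card_image_le
      _ = n₁ := by rw [Finset.card_univ, ZMod.card]
  -- fiber bound for non-blocking bases
  have hfib_nb : ∀ Y ∈ bases, Y ∉ Bl →
      (R.filter (fun P => P.2 = Y)).card ≤ 2 * (k + b - 1) + 1 := by
    intro Y hY hYn
    rcases (R.filter (fun P => P.2 = Y)).eq_empty_or_nonempty with hF | ⟨P₀, hP₀⟩
    · rw [hF]; simp
    obtain ⟨hP₀R, hP₀Y⟩ := Finset.mem_filter.mp hP₀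
    obtain ⟨i₀, hi₀⟩ := (hrect P₀ hP₀R).1
    have hnb : ∀ P ∈ R.filter (fun P => P.2 = Y), iDist P.1 P₀.1 ≤ b := by
      intro P hP
      obtain ⟨hPR, hPY⟩ := Finset.mem_filter.mp hP
      by_contra hcon
      push_neg at hcon
      exact hYn (Finset.mem_filter.mpr ⟨hY, P, hPR, P₀, hP₀R, hPY, hP₀Y, by omega⟩)
    set pick : Finset (ZMod n₁) × Finset (ZMod n₂) → ZMod n₁ :=
      fun P => if h : ∃ i, P.1 = cInt i k then h.choose else 0 with hpickdef
    have hpick : ∀ P ∈ R, P.1 = cInt (pick P) k := by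
      intro P hP
      have h : ∃ i, P.1 = cInt i k := (hrect P hP).1
      simp only [hpickdef, dif_pos h]
      exact h.choose_spec
    have hle : (R.filter (fun P => P.2 = Y)).card ≤ (Finset.range (2 * (k + b - 1) + 1)).card := by
      apply Finset.card_le_card_of_injOn
        (fun P => (pick P - i₀ + ((k + b - 1 : ℕ) : ZMod n₁)).val)
      · intro P hP
        have hPR := (Finset.mem_filter.mp hP).1
        have hd : iDist (cInt (pick P) k) (cInt i₀ k) ≤ b := by
          rw [← hpick P hPR, ← hi₀]; exact hnb P hP
        exact Finset.mem_range.mpr (by have := key_val hk h1 hd; beta_reduce; omega)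
      · intro P hP Q hQ hPQ
        have hPR := (Finset.mem_filter.mp hP).1
        have hQR := (Finset.mem_filter.mp hQ).1
        have hval := ZMod.val_injective n₁ hPQ
        have hpq : pick P = pick Q := by linear_combination hval
        refine Prod.ext ?_ (by rw [(Finset.mem_filter.mp hP).2, (Finset.mem_filter.mp hQ).2])
        rw [hpick P hPR, hpick Q hQR, hpq]
    rwa [Finset.card_range] at hle
  -- sum split
  have hsplit : ∑ Y ∈ bases \ Bl, (R.filter (fun P => P.2 = Y)).card
      + ∑ Y ∈ Bl, (R.filter (fun P => P.2 = Y)).card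
      = ∑ Y ∈ bases, (R.filter (fun P => P.2 = Y)).card := Finset.sum_sdiff hBlsub
  have hA : ∑ Y ∈ Bl, (R.filter (fun P => P.2 = Y)).card ≤ Bl.card * n₁ := by
    calc ∑ Y ∈ Bl, (R.filter (fun P => P.2 = Y)).card
        ≤ Bl.card • n₁ := Finset.sum_le_card_nsmul _ _ _ (fun Y _ => hfib_n1 Y)
      _ = Bl.card * n₁ := smul_eq_mul _ _
  have hB : ∑ Y ∈ bases \ Bl, (R.filter (fun P => P.2 = Y)).card
      ≤ (bases.card - Bl.card) * (2 * (k + b - 1) + 1) := by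
    calc ∑ Y ∈ bases \ Bl, (R.filter (fun P => P.2 = Y)).card
        ≤ (bases \ Bl).card • (2 * (k + b - 1) + 1) :=
          Finset.sum_le_card_nsmul _ _ _ (fun Y hY => by
            rw [Finset.mem_sdiff] at hY
            exact hfib_nb Y hY.1 hY.2)
      _ = (bases.card - Bl.card) * (2 * (k + b - 1) + 1) := by
          rw [smul_eq_mul, Finset.card_sdiff_of_subset hBlsub]
  -- final arithmetic
  set m := Bl.card with hm
  set c := 2 * (k + b - 1) + 1 with hc
  have hm1 : 1 ≤ m := hlow
  have hml : m ≤ ℓ - 1 := hhigh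
  have hcn : c ≤ n₁ := by omega
  have htotal : R.card ≤ (bases.card - m) * c + m * n₁ := by
    rw [hsum, ← hsplit]
    exact Nat.add_le_add hB hA
  set q := ℓ - 1 - m with hq
  calc R.card ≤ (bases.card - m) * c + m * n₁ := htotal
    _ ≤ (q + ℓ) * c + m * n₁ := by
        apply Nat.add_le_add_right
        exact Nat.mul_le_mul_right _ (by omega)
    _ = q * c + ℓ * c + m * n₁ := by ring
    _ ≤ q * n₁ + ℓ * c + m * n₁ := by
        apply Nat.add_le_add_right
        apply Nat.add_le_add_right
        exact Nat.mul_le_mul_left _ hcn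
    _ = (q + m) * n₁ + ℓ * c := by ring
    _ = (ℓ - 1) * n₁ + ℓ * c := by rw [show q + m = ℓ - 1 by omega]
    _ ≤ (ℓ - 1) * n₁ + b * (4 * b) := by
        apply Nat.add_le_add_left
        exact Nat.mul_le_mul hlb (by omega)
    _ ≤ 4 * b ^ 2 + (ℓ - 1) * n₁ := by
        have : b * (4 * b) = 4 * b ^ 2 := by ring
        omega
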